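/- For every real p ≠ 0, every greedy cover φ' of a set cover instance and every cover φ of the same instance satisfy M_p(φ) ≤ (n^{p+1} / ∑_{j=1}^{n} j^p)^{1/p} · M_p(φ'). In other words, the greedy algorithm approximates the maximum p-mean set cover problem within a factor of (n^{p+1}/∑_{j=1}^n j^p)^{1/p}. -/

import Mathlib

open Finset

/-- A set cover instance: a collection of subsets of a finite ground set `V` whose union is `V`. -/
structure SetCoverInstance (V : Type*) [Fintype V] [DecidableEq V] where
  sets : Finset (Finset V)
  covers : ∀ v : V, ∃ S ∈ sets, v ∈ S

/-- A cover: an assignment of each element to a subset of the collection containing it. -/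
structure Cover {V : Type*} [Fintype V] [DecidableEq V] (I : SetCoverInstance V) where
  φ : V → Finset V
  mem_sets : ∀ v, φ v ∈ I.sets
  self_mem : ∀ v, v ∈ φ v

variable {V : Type*} [Fintype V] [DecidableEq V] {I : SetCoverInstance V}

/-- `a_v`: the size of the part containing `v`. -/
def Cover.a (c : Cover I) (v : V) : ℕ :=
  (Finset.univ.filter fun w => c.φ w = c.φ v).card

/-- `c_i`: the size of the part assigned to subset `S`. -/
def Cover.partSize (c : Cover I) (S : Finset V) : ℕ :=
  (Finset.univ.filter fun w => c.φ w = S).card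

/-- A greedy cover: its parts can be ordered `P 0, …, P (m-1)` so that each `P j` is obtained by
choosing a subset covering a maximum number of yet-uncovered elements. -/
def Cover.IsGreedy (c : Cover I) : Prop :=
  ∃ (m : ℕ) (P : ℕ → Finset V),
    (∀ v : V, ∃ j < m, v ∈ P j) ∧
    (∀ j < m, ∃ S ∈ I.sets,
      P j = S \ (Finset.range j).biUnion P ∧
      ∀ T ∈ I.sets, (T \ (Finset.range j).biUnion P).card ≤ (P j).card) ∧
    (∀ j < m, ∀ v ∈ P j, (Finset.univ.filter fun w => c.φ w = c.φ v) = P j)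

/-- The generalized `p`-mean of the part sizes `a_v`, over the elements. -/
noncomputable def Cover.pMean (c : Cover I) (p : ℝ) : ℝ :=
  ((1 / (Fintype.card V : ℝ)) * ∑ v : V, (c.a v : ℝ) ^ p) ^ (1 / p)
open Real



/-- Bernoulli-based key inequality, positive exponent. -/
lemma scov_clean_pos {p : ℝ} (hp : 0 < p) {b : ℝ} (hb : 2 ≤ b) :
    (b+1)^p * (b^(p+1) - (b-1)^(p+1)) ≤ b^p * ((b+1)^(p+1) - b^(p+1)) := by
  have hb0 : (0:ℝ) < b := by linarith
  have hb1 : (0:ℝ) < b - 1 := by linarith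
  have hb2 : (0:ℝ) < b + 1 := by linarith
  set B := b^p with hB
  set C := (b+1)^p with hC
  set E := (b-1)^p with hE
  have hBpos : 0 < B := rpow_pos_of_pos hb0 p
  have hCpos : 0 < C := rpow_pos_of_pos hb2 p
  have hEpos : 0 < E := rpow_pos_of_pos hb1 p
  have e1 : b^(p+1) = B * b := rpow_add_one hb0.ne' p
  have e2 : (b+1)^(p+1) = C * (b+1) := rpow_add_one hb2.ne' p
  have e3 : (b-1)^(p+1) = E * (b-1) := rpow_add_one hb1.ne' p
  -- Bernoulli for x = (b+1)/b
  have bern1 : (b + (p+1))/b ≤ (C*(b+1))/(B*b) := by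
    have h0 : ((1:ℝ) + 1/b) ^ (p+1) = (C*(b+1))/(B*b) := by
      have : (1:ℝ) + 1/b = (b+1)/b := by field_simp
      rw [this, div_rpow hb2.le hb0.le, e1, e2]
    have h1 := one_add_mul_self_le_rpow_one_add (s := 1/b) (by nlinarith [one_div_pos.mpr hb0]) (p := p+1) (by linarith)
    rw [h0] at h1
    calc (b + (p+1))/b = 1 + (p+1) * (1/b) := by field_simp
    _ ≤ _ := h1
  have bern1' : B*b + B*(p+1) ≤ C*(b+1) := by
    have h5 : (b + (p+1)) * (B*b) ≤ C*(b+1)*b :=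
      (div_le_div_iff₀ hb0 (by positivity)).mp bern1
    have h6 : (B*b + B*(p+1)) * b ≤ (C*(b+1)) * b := by
      calc (B*b + B*(p+1)) * b = (b + (p+1)) * (B*b) := by ring
      _ ≤ C*(b+1)*b := h5
      _ = (C*(b+1))*b := by ring
    exact le_of_mul_le_mul_right h6 hb0
  -- Bernoulli for y = ((b-1)*(b+1))/(b*b)
  have bern2' : B*B*(b*b) - B*B*(p+1) ≤ C*E*((b-1)*(b+1)) := by
    have hybb : (0:ℝ) < b*b := by positivity
    have hs : (-1:ℝ) ≤ -(1/(b*b)) := by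
      rw [neg_le_neg_iff]
      rw [div_le_one hybb]; nlinarith
    have h0 : ((1:ℝ) + -(1/(b*b))) ^ (p+1) = (E*(b-1)*(C*(b+1)))/((B*b)*(B*b)) := by
      have : (1:ℝ) + -(1/(b*b)) = ((b-1)*(b+1))/(b*b) := by field_simp; ring
      rw [this, div_rpow (by positivity) hybb.le, mul_rpow hb1.le hb2.le,
        mul_rpow hb0.le hb0.le, e1, e2, e3]
    have h1 := one_add_mul_self_le_rpow_one_add (s := -(1/(b*b))) hs (p := p+1) (by linarith)
    rw [h0] at h1
    have h2 : (b*b - (p+1))/(b*b) ≤ (E*(b-1)*(C*(b+1)))/((B*b)*(B*b)) := by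
      calc (b*b - (p+1))/(b*b) = 1 + (p+1) * -(1/(b*b)) := by field_simp; ring
      _ ≤ _ := h1
    have h5 : (b*b - (p+1)) * ((B*b)*(B*b)) ≤ E*(b-1)*(C*(b+1))*(b*b) :=
      (div_le_div_iff₀ hybb (by positivity)).mp h2
    have h6 : (B*B*(b*b) - B*B*(p+1)) * (b*b) ≤ (C*E*((b-1)*(b+1))) * (b*b) := by
      calc (B*B*(b*b) - B*B*(p+1)) * (b*b) = (b*b - (p+1)) * ((B*b)*(B*b)) := by ring
      _ ≤ E*(b-1)*(C*(b+1))*(b*b) := h5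
      _ = (C*E*((b-1)*(b+1))) * (b*b) := by ring
    exact le_of_mul_le_mul_right h6 hybb
  have key : B*B*b ≤ B*C + C*E*(b-1) := by
    have hB1 := mul_le_mul_of_nonneg_left bern1' hBpos.le
    have h7 : (B*B*b)*(b+1) ≤ (B*C + C*E*(b-1))*(b+1) := by nlinarith [hB1, bern2']
    exact le_of_mul_le_mul_right h7 hb2
  rw [e1, e2, e3]
  nlinarith [key]



lemma scov_clean_neg {p : ℝ} (hp1 : -1 < p) (hp0 : p < 0) {b : ℝ} (hb : 2 ≤ b) :
    b^p * ((b+1)^(p+1) - b^(p+1)) ≤ (b+1)^p * (b^(p+1) - (b-1)^(p+1)) := by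
  have hb0 : (0:ℝ) < b := by linarith
  have hb1 : (0:ℝ) < b - 1 := by linarith
  have hb2 : (0:ℝ) < b + 1 := by linarith
  set B := b^p with hB
  set C := (b+1)^p with hC
  set E := (b-1)^p with hE
  have hBpos : 0 < B := rpow_pos_of_pos hb0 p
  have hCpos : 0 < C := rpow_pos_of_pos hb2 p
  have hEpos : 0 < E := rpow_pos_of_pos hb1 p
  have e1 : b^(p+1) = B * b := rpow_add_one hb0.ne' p
  have e2 : (b+1)^(p+1) = C * (b+1) := rpow_add_one hb2.ne' p
  have e3 : (b-1)^(p+1) = E * (b-1) := rpow_add_one hb1.ne' p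
  have bern1 : (C*(b+1))/(B*b) ≤ (b + (p+1))/b := by
    have h0 : ((1:ℝ) + 1/b) ^ (p+1) = (C*(b+1))/(B*b) := by
      have : (1:ℝ) + 1/b = (b+1)/b := by field_simp
      rw [this, div_rpow hb2.le hb0.le, e1, e2]
    have h1 := rpow_one_add_le_one_add_mul_self (s := 1/b)
      (by nlinarith [one_div_pos.mpr hb0]) (p := p+1) (by linarith) (by linarith)
    rw [h0] at h1
    calc (C*(b+1))/(B*b) ≤ 1 + (p+1) * (1/b) := h1
    _ = (b + (p+1))/b := by field_simp
  have bern1' : C*(b+1) ≤ B*b + B*(p+1) := by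
    have h5 : C*(b+1)*b ≤ (b + (p+1)) * (B*b) :=
      (div_le_div_iff₀ (by positivity) hb0).mp bern1
    have h6 : (C*(b+1)) * b ≤ (B*b + B*(p+1)) * b := by
      calc (C*(b+1)) * b = C*(b+1)*b := by ring
      _ ≤ (b + (p+1)) * (B*b) := h5
      _ = (B*b + B*(p+1)) * b := by ring
    exact le_of_mul_le_mul_right h6 hb0
  have bern2' : C*E*((b-1)*(b+1)) ≤ B*B*(b*b) - B*B*(p+1) := by
    have hybb : (0:ℝ) < b*b := by positivity
    have hs : (-1:ℝ) ≤ -(1/(b*b)) := by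
      rw [neg_le_neg_iff, div_le_one hybb]; nlinarith
    have h0 : ((1:ℝ) + -(1/(b*b))) ^ (p+1) = (E*(b-1)*(C*(b+1)))/((B*b)*(B*b)) := by
      have : (1:ℝ) + -(1/(b*b)) = ((b-1)*(b+1))/(b*b) := by field_simp; ring
      rw [this, div_rpow (by positivity) hybb.le, mul_rpow hb1.le hb2.le,
        mul_rpow hb0.le hb0.le, e1, e2, e3]
    have h1 := rpow_one_add_le_one_add_mul_self (s := -(1/(b*b))) hs (p := p+1)
      (by linarith) (by linarith)
    rw [h0] at h1
    have h2 : (E*(b-1)*(C*(b+1)))/((B*b)*(B*b)) ≤ (b*b - (p+1))/(b*b) := by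
      calc (E*(b-1)*(C*(b+1)))/((B*b)*(B*b)) ≤ 1 + (p+1) * -(1/(b*b)) := h1
      _ = (b*b - (p+1))/(b*b) := by field_simp; ring
    have h5 : E*(b-1)*(C*(b+1))*(b*b) ≤ (b*b - (p+1)) * ((B*b)*(B*b)) :=
      (div_le_div_iff₀ (by positivity) hybb).mp h2
    have h6 : (C*E*((b-1)*(b+1))) * (b*b) ≤ (B*B*(b*b) - B*B*(p+1)) * (b*b) := by
      calc (C*E*((b-1)*(b+1))) * (b*b) = E*(b-1)*(C*(b+1))*(b*b) := by ring
      _ ≤ (b*b - (p+1)) * ((B*b)*(B*b)) := h5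
      _ = (B*B*(b*b) - B*B*(p+1)) * (b*b) := by ring
    exact le_of_mul_le_mul_right h6 hybb
  have key : B*C + C*E*(b-1) ≤ B*B*b := by
    have hB1 := mul_le_mul_of_nonneg_left bern1' hBpos.le
    have h7 : (B*C + C*E*(b-1))*(b+1) ≤ (B*B*b)*(b+1) := by nlinarith [hB1, bern2']
    exact le_of_mul_le_mul_right h7 hb2
  rw [e1, e2, e3]
  nlinarith [key]



noncomputable def scovS (p : ℝ) (k : ℕ) : ℝ := ∑ j ∈ Finset.Icc 1 k, (j:ℝ)^p

lemma scovS_succ (p : ℝ) (k : ℕ) : scovS p (k+1) = scovS p k + ((k:ℝ)+1)^p := by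
  unfold scovS
  rw [Finset.sum_Icc_succ_top (by omega)]
  push_cast
  ring

lemma scovS_one (p : ℝ) : scovS p 1 = 1 := by simp [scovS]

lemma scovS_pos (p : ℝ) {k : ℕ} (hk : 1 ≤ k) : 0 < scovS p k := by
  apply Finset.sum_pos
  · intro j hj
    have : 1 ≤ j := (Finset.mem_Icc.mp hj).1
    exact rpow_pos_of_pos (by exact_mod_cast this) p
  · exact ⟨1, Finset.mem_Icc.mpr ⟨le_refl 1, hk⟩⟩

lemma scovT_pos {p : ℝ} (hp : 0 < p) : ∀ k : ℕ, 1 ≤ k →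
    (k:ℝ)^(p+1) * ((k:ℝ)+1)^p ≤ (((k:ℝ)+1)^(p+1) - (k:ℝ)^(p+1)) * scovS p k := by
  intro k hk
  induction k, hk using Nat.le_induction with
  | base =>
    have h2 : (1:ℝ) ≤ (2:ℝ)^p := one_le_rpow one_le_two hp.le
    have h11 : ((1:ℝ)+1) = 2 := by norm_num
    have e : ((2:ℝ))^(p+1) = 2^p * 2 := rpow_add_one (two_ne_zero (α := ℝ)) p
    push_cast
    rw [scovS_one, one_rpow, h11, e]
    linarith
  | succ k hk IH =>
    have hx0 : (0:ℝ) < (k:ℝ) := by exact_mod_cast hk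
    have hx2 : (1:ℝ) ≤ (k:ℝ) := by exact_mod_cast hk
    set x : ℝ := (k:ℝ) with hxdef
    have hx1 : (0:ℝ) < x + 1 := by linarith
    have hD1 : (0:ℝ) < (x+1)^(p+1) - x^(p+1) := by
      have := rpow_lt_rpow hx0.le (by linarith : x < x + 1) (by linarith : 0 < p+1)
      linarith
    have hD2 : (0:ℝ) < (x+2)^(p+1) - (x+1)^(p+1) := by
      have := rpow_lt_rpow hx1.le (by linarith : x+1 < x + 2) (by linarith : 0 < p+1)
      linarith
    have hclean : (x+2)^p * ((x+1)^(p+1) - x^(p+1)) ≤ (x+1)^p * ((x+2)^(p+1) - (x+1)^(p+1)) := by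
      have hb : (2:ℝ) ≤ x + 1 := by linarith
      have h := scov_clean_pos hp hb
      have e1 : x+1+1 = x+2 := by ring
      have e2 : x+1-1 = x := by ring
      rw [e1, e2] at h
      exact h
    set S := scovS p k with hSdef
    have halpha : (x+1)^p * (x+1)^(p+1) ≤ ((x+1)^(p+1) - x^(p+1)) * (S + (x+1)^p) := by
      nlinarith [IH]
    have hS' : scovS p (k+1) = S + (x+1)^p := scovS_succ p k
    have hgoal2 : ((x+1)^(p+1) - x^(p+1)) * ((x+1)^(p+1)*(x+2)^p)
        ≤ ((x+1)^(p+1) - x^(p+1)) * (((x+2)^(p+1) - (x+1)^(p+1)) * (S + (x+1)^p)) := by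
      have hA := mul_le_mul_of_nonneg_left halpha hD2.le
      have hB := mul_le_mul_of_nonneg_left hclean (rpow_pos_of_pos hx1 (p+1)).le
      nlinarith [hA, hB]
    have := le_of_mul_le_mul_left hgoal2 hD1
    push_cast
    rw [hS']
    calc ((x:ℝ)+1)^(p+1) * ((x+1)+1)^p = (x+1)^(p+1)*(x+2)^p := by ring_nf
    _ ≤ ((x+2)^(p+1) - (x+1)^(p+1)) * (S + (x+1)^p) := this
    _ = (((x+1)+1)^(p+1) - (x+1)^(p+1)) * (S + (x+1)^p) := by ring_nf
lemma scovT_neg {p : ℝ} (hp1 : -1 < p) (hp0 : p < 0) : ∀ k : ℕ, 1 ≤ k →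
    (((k:ℝ)+1)^(p+1) - (k:ℝ)^(p+1)) * scovS p k ≤ (k:ℝ)^(p+1) * ((k:ℝ)+1)^p := by
  intro k hk
  induction k, hk using Nat.le_induction with
  | base =>
    have h2 : (2:ℝ)^p ≤ 1 := rpow_le_one_of_one_le_of_nonpos one_le_two hp0.le
    have h11 : ((1:ℝ)+1) = 2 := by norm_num
    have e : ((2:ℝ))^(p+1) = 2^p * 2 := rpow_add_one (two_ne_zero (α := ℝ)) p
    push_cast
    rw [scovS_one, one_rpow, h11, e]
    linarith
  | succ k hk IH =>
    have hx0 : (0:ℝ) < (k:ℝ) := by exact_mod_cast hk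
    have hx2 : (1:ℝ) ≤ (k:ℝ) := by exact_mod_cast hk
    set x : ℝ := (k:ℝ) with hxdef
    have hx1 : (0:ℝ) < x + 1 := by linarith
    have hD1 : (0:ℝ) < (x+1)^(p+1) - x^(p+1) := by
      have := rpow_lt_rpow hx0.le (by linarith : x < x + 1) (by linarith : 0 < p+1)
      linarith
    have hD2 : (0:ℝ) < (x+2)^(p+1) - (x+1)^(p+1) := by
      have := rpow_lt_rpow hx1.le (by linarith : x+1 < x + 2) (by linarith : 0 < p+1)
      linarith
    have hclean : (x+1)^p * ((x+2)^(p+1) - (x+1)^(p+1)) ≤ (x+2)^p * ((x+1)^(p+1) - x^(p+1)) := by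
      have hb : (2:ℝ) ≤ x + 1 := by linarith
      have h := scov_clean_neg hp1 hp0 hb
      have e1 : x+1+1 = x+2 := by ring
      have e2 : x+1-1 = x := by ring
      rw [e1, e2] at h
      exact h
    set S := scovS p k with hSdef
    have halpha : ((x+1)^(p+1) - x^(p+1)) * (S + (x+1)^p) ≤ (x+1)^p * (x+1)^(p+1) := by
      nlinarith [IH]
    have hS' : scovS p (k+1) = S + (x+1)^p := scovS_succ p k
    have hgoal2 : ((x+1)^(p+1) - x^(p+1)) * (((x+2)^(p+1) - (x+1)^(p+1)) * (S + (x+1)^p))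
        ≤ ((x+1)^(p+1) - x^(p+1)) * ((x+1)^(p+1)*(x+2)^p) := by
      have hA := mul_le_mul_of_nonneg_left halpha hD2.le
      have hB := mul_le_mul_of_nonneg_left hclean (rpow_pos_of_pos hx1 (p+1)).le
      nlinarith [hA, hB]
    have := le_of_mul_le_mul_left hgoal2 hD1
    push_cast
    rw [hS']
    calc (((x:ℝ)+1+1)^(p+1) - (x+1)^(p+1)) * (S + (x+1)^p)
        = ((x+2)^(p+1) - (x+1)^(p+1)) * (S + (x+1)^p) := by ring_nf
    _ ≤ (x+1)^(p+1)*(x+2)^p := this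
    _ = (x+1)^(p+1) * ((x+1)+1)^p := by ring_nf

lemma scov_step_pos {p : ℝ} (hp : 0 < p) {k : ℕ} (hk : 1 ≤ k) :
    scovS p (k+1) * (k:ℝ)^(p+1) ≤ ((k:ℝ)+1)^(p+1) * scovS p k := by
  have hT := scovT_pos hp k hk
  have hS' : scovS p (k+1) = scovS p k + ((k:ℝ)+1)^p := scovS_succ p k
  have hkpos : (0:ℝ) < (k:ℝ)^(p+1) := rpow_pos_of_pos (by exact_mod_cast hk) _
  nlinarith [hT]

lemma scov_step_neg {p : ℝ} (hp0 : p < 0) {k : ℕ} (hk : 1 ≤ k) :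
    ((k:ℝ)+1)^(p+1) * scovS p k ≤ scovS p (k+1) * (k:ℝ)^(p+1) := by
  have hS' : scovS p (k+1) = scovS p k + ((k:ℝ)+1)^p := scovS_succ p k
  have hx0 : (0:ℝ) < (k:ℝ) := by exact_mod_cast hk
  rcases le_or_gt p (-1) with hple | hpgt
  · have h1 : ((k:ℝ)+1)^(p+1) ≤ (k:ℝ)^(p+1) :=
      rpow_le_rpow_of_nonpos hx0 (by linarith) (by linarith)
    have hSpos : 0 < scovS p k := scovS_pos p hk
    have h2 : scovS p k ≤ scovS p (k+1) := by
      rw [hS']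
      nlinarith [rpow_pos_of_pos (by linarith : (0:ℝ) < (k:ℝ)+1) p]
    calc ((k:ℝ)+1)^(p+1) * scovS p k ≤ (k:ℝ)^(p+1) * scovS p k := by
          exact mul_le_mul_of_nonneg_right h1 hSpos.le
    _ ≤ (k:ℝ)^(p+1) * scovS p (k+1) := by
          exact mul_le_mul_of_nonneg_left h2 (rpow_pos_of_pos hx0 _).le
    _ = scovS p (k+1) * (k:ℝ)^(p+1) := by ring
  · have hT := scovT_neg hpgt hp0 k hk
    have hkpos : (0:ℝ) < (k:ℝ)^(p+1) := rpow_pos_of_pos hx0 _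
    nlinarith [hT]

lemma scov_ratio_pos {p : ℝ} (hp : 0 < p) {a n : ℕ} (ha : 1 ≤ a) (han : a ≤ n) :
    scovS p n * (a:ℝ)^(p+1) ≤ (n:ℝ)^(p+1) * scovS p a := by
  induction n, han using Nat.le_induction with
  | base => exact le_of_eq (mul_comm _ _)
  | succ n hn IH =>
    have hn1 : 1 ≤ n := le_trans ha hn
    have h1 := scov_step_pos hp hn1
    have hnp : (0:ℝ) < (n:ℝ)^(p+1) := rpow_pos_of_pos (by exact_mod_cast hn1) _
    have hap : (0:ℝ) < (a:ℝ)^(p+1) := rpow_pos_of_pos (by exact_mod_cast ha) _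
    have hSa : (0:ℝ) < scovS p a := scovS_pos p ha
    have h2 : scovS p (n+1) * (a:ℝ)^(p+1) * (n:ℝ)^(p+1)
        ≤ ((n:ℝ)+1)^(p+1) * ((n:ℝ)^(p+1) * scovS p a) := by
      calc scovS p (n+1) * (a:ℝ)^(p+1) * (n:ℝ)^(p+1)
          = (scovS p (n+1) * (n:ℝ)^(p+1)) * (a:ℝ)^(p+1) := by ring
      _ ≤ (((n:ℝ)+1)^(p+1) * scovS p n) * (a:ℝ)^(p+1) :=
          mul_le_mul_of_nonneg_right h1 hap.le
      _ = ((n:ℝ)+1)^(p+1) * (scovS p n * (a:ℝ)^(p+1)) := by ring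
      _ ≤ ((n:ℝ)+1)^(p+1) * ((n:ℝ)^(p+1) * scovS p a) :=
          mul_le_mul_of_nonneg_left IH (rpow_pos_of_pos (by positivity) _).le
    have h3 : scovS p (n+1) * (a:ℝ)^(p+1) ≤ ((n:ℝ)+1)^(p+1) * scovS p a := by
      have := (mul_le_mul_iff_left₀ hnp).mp (by
        calc scovS p (n+1) * (a:ℝ)^(p+1) * (n:ℝ)^(p+1)
            ≤ ((n:ℝ)+1)^(p+1) * ((n:ℝ)^(p+1) * scovS p a) := h2
        _ = ((n:ℝ)+1)^(p+1) * scovS p a * (n:ℝ)^(p+1) := by ring)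
      exact this
    push_cast
    exact h3

lemma scov_ratio_neg {p : ℝ} (hp : p < 0) {a n : ℕ} (ha : 1 ≤ a) (han : a ≤ n) :
    (n:ℝ)^(p+1) * scovS p a ≤ scovS p n * (a:ℝ)^(p+1) := by
  induction n, han using Nat.le_induction with
  | base => exact le_of_eq (mul_comm _ _)
  | succ n hn IH =>
    have hn1 : 1 ≤ n := le_trans ha hn
    have h1 := scov_step_neg hp hn1
    have hnp : (0:ℝ) < (n:ℝ)^(p+1) := rpow_pos_of_pos (by exact_mod_cast hn1) _
    have hap : (0:ℝ) < (a:ℝ)^(p+1) := rpow_pos_of_pos (by exact_mod_cast ha) _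
    have h2 : ((n:ℝ)+1)^(p+1) * scovS p a * (n:ℝ)^(p+1)
        ≤ scovS p (n+1) * (a:ℝ)^(p+1) * (n:ℝ)^(p+1) := by
      calc ((n:ℝ)+1)^(p+1) * scovS p a * (n:ℝ)^(p+1)
          = ((n:ℝ)+1)^(p+1) * ((n:ℝ)^(p+1) * scovS p a) := by ring
      _ ≤ ((n:ℝ)+1)^(p+1) * (scovS p n * (a:ℝ)^(p+1)) :=
          mul_le_mul_of_nonneg_left IH (rpow_pos_of_pos (by positivity) _).le
      _ = (((n:ℝ)+1)^(p+1) * scovS p n) * (a:ℝ)^(p+1) := by ring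
      _ ≤ (scovS p (n+1) * (n:ℝ)^(p+1)) * (a:ℝ)^(p+1) :=
          mul_le_mul_of_nonneg_right h1 hap.le
      _ = scovS p (n+1) * (a:ℝ)^(p+1) * (n:ℝ)^(p+1) := by ring
    have h3 := (mul_le_mul_iff_left₀ hnp).mp h2
    push_cast
    exact h3
lemma scov_rank_sum_le {α : Type*} [DecidableEq α] (t g : α → ℕ) (F : ℕ → ℝ)
    (hF : ∀ i j : ℕ, 1 ≤ i → i ≤ j → F i ≤ F j) :
    ∀ Q : Finset α, (∀ v ∈ Q, (Q.filter fun w => t v ≤ t w).card ≤ g v) →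
      ∑ r ∈ Finset.Icc 1 Q.card, F r ≤ ∑ v ∈ Q, F (g v) := by
  intro Q
  induction Q using Finset.strongInductionOn with
  | _ Q IH =>
    intro hQ
    rcases Q.eq_empty_or_nonempty with rfl | hne
    · simp
    obtain ⟨v, hv, hmin⟩ := Finset.exists_min_image Q t hne
    have hQcard : 1 ≤ Q.card := Finset.card_pos.mpr hne
    have hfull : Q.filter (fun w => t v ≤ t w) = Q :=
      Finset.filter_true_of_mem (fun w hw => hmin w hw)
    have hgv : Q.card ≤ g v := by
      have := hQ v hv; rwa [hfull] at this
    have hsub : Q.erase v ⊂ Q := Finset.erase_ssubset hv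
    have hQ' : ∀ w ∈ Q.erase v, ((Q.erase v).filter fun u => t w ≤ t u).card ≤ g w := by
      intro w hw
      exact le_trans (Finset.card_le_card
        (Finset.filter_subset_filter _ (Finset.erase_subset _ _)))
        (hQ w (Finset.mem_of_mem_erase hw))
    have IH' := IH _ hsub hQ'
    have hcard : (Q.erase v).card = Q.card - 1 := Finset.card_erase_of_mem hv
    obtain ⟨m, hm⟩ : ∃ m, Q.card = m + 1 := ⟨Q.card - 1, by omega⟩
    have hsplit : ∑ w ∈ Q.erase v, F (g w) + F (g v) = ∑ w ∈ Q, F (g w) :=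
      Finset.sum_erase_add Q _ hv
    have hys : F (m+1) ≤ F (g v) := hF (m+1) (g v) (by omega) (by omega)
    have hIH2 : ∑ r ∈ Finset.Icc 1 m, F r ≤ ∑ w ∈ Q.erase v, F (g w) := by
      have : (Q.erase v).card = m := by omega
      rwa [this] at IH'
    rw [hm, Finset.sum_Icc_succ_top (by omega), ← hsplit]
    exact add_le_add hIH2 hys

lemma scov_rank_sum_ge {α : Type*} [DecidableEq α] (t g : α → ℕ) (F : ℕ → ℝ)
    (hF : ∀ i j : ℕ, 1 ≤ i → i ≤ j → F j ≤ F i) :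
    ∀ Q : Finset α, (∀ v ∈ Q, (Q.filter fun w => t v ≤ t w).card ≤ g v) →
      ∑ v ∈ Q, F (g v) ≤ ∑ r ∈ Finset.Icc 1 Q.card, F r := by
  intro Q
  induction Q using Finset.strongInductionOn with
  | _ Q IH =>
    intro hQ
    rcases Q.eq_empty_or_nonempty with rfl | hne
    · simp
    obtain ⟨v, hv, hmin⟩ := Finset.exists_min_image Q t hne
    have hQcard : 1 ≤ Q.card := Finset.card_pos.mpr hne
    have hfull : Q.filter (fun w => t v ≤ t w) = Q :=
      Finset.filter_true_of_mem (fun w hw => hmin w hw)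
    have hgv : Q.card ≤ g v := by
      have := hQ v hv; rwa [hfull] at this
    have hsub : Q.erase v ⊂ Q := Finset.erase_ssubset hv
    have hQ' : ∀ w ∈ Q.erase v, ((Q.erase v).filter fun u => t w ≤ t u).card ≤ g w := by
      intro w hw
      exact le_trans (Finset.card_le_card
        (Finset.filter_subset_filter _ (Finset.erase_subset _ _)))
        (hQ w (Finset.mem_of_mem_erase hw))
    have IH' := IH _ hsub hQ'
    have hcard : (Q.erase v).card = Q.card - 1 := Finset.card_erase_of_mem hv
    obtain ⟨m, hm⟩ : ∃ m, Q.card = m + 1 := ⟨Q.card - 1, by omega⟩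
    have hsplit : ∑ w ∈ Q.erase v, F (g w) + F (g v) = ∑ w ∈ Q, F (g w) :=
      Finset.sum_erase_add Q _ hv
    have hys : F (g v) ≤ F (m+1) := hF (m+1) (g v) (by omega) (by omega)
    have hIH2 : ∑ w ∈ Q.erase v, F (g w) ≤ ∑ r ∈ Finset.Icc 1 m, F r := by
      have : (Q.erase v).card = m := by omega
      rwa [this] at IH'
    rw [hm, Finset.sum_Icc_succ_top (by omega), ← hsplit]
    exact add_le_add hIH2 hys

set_option maxHeartbeats 1000000 in
theorem greedy_pMean_approx (p : ℝ) (hp : p ≠ 0)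
    (c' : Cover I) (hc' : c'.IsGreedy) (c : Cover I) :
    c.pMean p ≤
      ((Fintype.card V : ℝ) ^ (p + 1) /
          ∑ j ∈ Finset.Icc 1 (Fintype.card V), (j : ℝ) ^ p) ^ (1 / p) *
        c'.pMean p := by
  classical
  have hSdef : ∑ j ∈ Finset.Icc 1 (Fintype.card V), (j : ℝ) ^ p
      = scovS p (Fintype.card V) := rfl
  rcases Nat.eq_zero_or_pos (Fintype.card V) with hn0 | hnpos
  · have hV : IsEmpty V := Fintype.card_eq_zero_iff.mp hn0
    have h1 : c.pMean p = 0 := by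
      rw [Cover.pMean, Finset.univ_eq_empty, Finset.sum_empty, mul_zero,
        zero_rpow (one_div_ne_zero hp)]
    have h2 : c'.pMean p = 0 := by
      rw [Cover.pMean, Finset.univ_eq_empty, Finset.sum_empty, mul_zero,
        zero_rpow (one_div_ne_zero hp)]
    rw [h1, h2, mul_zero]
  -- main case
  have hVne : Nonempty V := Fintype.card_pos_iff.mp hnpos
  set n := Fintype.card V with hn
  have hn0R : (0:ℝ) < (n:ℝ) := by exact_mod_cast hnpos
  have hSpos : 0 < scovS p n := scovS_pos p hnpos
  have hnp1 : (0:ℝ) < (n:ℝ)^(p+1) := rpow_pos_of_pos hn0R _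
  obtain ⟨m, P, hPcov, hPgre, hPpart⟩ := hc'
  choose t ht1 ht2 using hPcov
  have hdisj : ∀ v : V, ∀ i : ℕ, i < t v → v ∉ P i := by
    intro v i hi hvi
    obtain ⟨S, _, hPj, _⟩ := hPgre (t v) (ht1 v)
    have hv := ht2 v
    rw [hPj, Finset.mem_sdiff] at hv
    exact hv.2 (Finset.mem_biUnion.mpr ⟨i, Finset.mem_range.mpr hi, hvi⟩)
  have ha' : ∀ v, c'.a v = (P (t v)).card := by
    intro v
    rw [Cover.a, hPpart (t v) (ht1 v) v (ht2 v)]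
  have hrank : ∀ (v : V) (Q : Finset V), Q ⊆ c.φ v →
      (Q.filter fun w => t v ≤ t w).card ≤ c'.a v := by
    intro v Q hQsub
    rw [ha']
    obtain ⟨S, hS, hPj, hmax⟩ := hPgre (t v) (ht1 v)
    refine le_trans (Finset.card_le_card ?_) (hmax (c.φ v) (c.mem_sets v))
    intro w hw
    rw [Finset.mem_filter] at hw
    rw [Finset.mem_sdiff]
    refine ⟨hQsub hw.1, ?_⟩
    intro hmem
    obtain ⟨i, hi, hwin⟩ := Finset.mem_biUnion.mp hmem
    exact hdisj w i (lt_of_lt_of_le (Finset.mem_range.mp hi) hw.2) hwin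
  have ha1 : ∀ v, 1 ≤ c.a v := fun v =>
    Finset.card_pos.mpr ⟨v, Finset.mem_filter.mpr ⟨Finset.mem_univ v, rfl⟩⟩
  have ha1' : ∀ v, 1 ≤ c'.a v := fun v =>
    Finset.card_pos.mpr ⟨v, Finset.mem_filter.mpr ⟨Finset.mem_univ v, rfl⟩⟩
  -- fiber decomposition
  set im := Finset.univ.image c.φ with him
  have hfibA : ∑ S ∈ im, ∑ v ∈ Finset.univ.filter (fun v => c.φ v = S), ((c.a v : ℝ))^p
      = ∑ v : V, ((c.a v : ℝ))^p :=
    Finset.sum_fiberwise_of_maps_to (fun v _ => Finset.mem_image_of_mem _ (Finset.mem_univ v)) _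
  have hfibA' : ∑ S ∈ im, ∑ v ∈ Finset.univ.filter (fun v => c.φ v = S), ((c'.a v : ℝ))^p
      = ∑ v : V, ((c'.a v : ℝ))^p :=
    Finset.sum_fiberwise_of_maps_to (fun v _ => Finset.mem_image_of_mem _ (Finset.mem_univ v)) _
  -- per-fiber facts
  have hfiber : ∀ S ∈ im,
      (0 < (Finset.univ.filter (fun v => c.φ v = S)).card ∧
       (Finset.univ.filter (fun v => c.φ v = S)).card ≤ n) ∧
      (∀ v ∈ Finset.univ.filter (fun v => c.φ v = S),
        c.a v = (Finset.univ.filter (fun v => c.φ v = S)).card) ∧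
      (∀ v ∈ Finset.univ.filter (fun v => c.φ v = S),
        ((Finset.univ.filter (fun v => c.φ v = S)).filter fun w => t v ≤ t w).card ≤ c'.a v) := by
    intro S hS
    set Q := Finset.univ.filter (fun v => c.φ v = S) with hQ
    obtain ⟨v0, _, hv0⟩ := Finset.mem_image.mp hS
    have hQne : Q.Nonempty := ⟨v0, Finset.mem_filter.mpr ⟨Finset.mem_univ _, hv0⟩⟩
    refine ⟨⟨Finset.card_pos.mpr hQne,
      le_trans (Finset.card_filter_le _ _) (le_of_eq Finset.card_univ)⟩, ?_, ?_⟩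
    · intro v hv
      have hφv : c.φ v = S := (Finset.mem_filter.mp hv).2
      rw [Cover.a]
      congr 1
      apply Finset.filter_congr
      intro w _
      rw [hφv]
    · intro v hv
      apply hrank v Q
      intro w hw
      have hφw : c.φ w = S := (Finset.mem_filter.mp hw).2
      have hφv : c.φ v = S := (Finset.mem_filter.mp hv).2
      have := c.self_mem w
      rwa [hφw, ← hφv] at this
  rcases lt_or_gt_of_ne hp with hneg | hpos
  · -- p < 0
    have main : (n:ℝ)^(p+1) * ∑ v : V, ((c'.a v : ℝ))^p
        ≤ scovS p n * ∑ v : V, ((c.a v : ℝ))^p := by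
      rw [← hfibA, ← hfibA', Finset.mul_sum, Finset.mul_sum]
      apply Finset.sum_le_sum
      intro S hS
      obtain ⟨⟨hQpos, hQle⟩, hval, hrk⟩ := hfiber S hS
      set Q := Finset.univ.filter (fun v => c.φ v = S) with hQ
      have hsum1 : ∑ v ∈ Q, ((c.a v : ℝ))^p = (Q.card:ℝ)^(p+1) := by
        rw [Finset.sum_congr rfl (fun v hv => by rw [hval v hv])]
        rw [Finset.sum_const, nsmul_eq_mul,
          rpow_add_one (by exact_mod_cast hQpos.ne' : (Q.card:ℝ) ≠ 0) p]
        ring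
      have hsum2 : ∑ v ∈ Q, ((c'.a v : ℝ))^p ≤ scovS p Q.card := by
        apply scov_rank_sum_ge t c'.a (fun r => (r:ℝ)^p)
        · intro i j hi hij
          exact rpow_le_rpow_of_nonpos (by exact_mod_cast hi) (by exact_mod_cast hij) hneg.le
        · exact hrk
      calc (n:ℝ)^(p+1) * ∑ v ∈ Q, ((c'.a v : ℝ))^p
          ≤ (n:ℝ)^(p+1) * scovS p Q.card := mul_le_mul_of_nonneg_left hsum2 hnp1.le
      _ ≤ scovS p n * (Q.card:ℝ)^(p+1) := scov_ratio_neg hneg hQpos hQle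
      _ = scovS p n * ∑ v ∈ Q, ((c.a v : ℝ))^p := by rw [hsum1]
    have hA'pos : 0 < ∑ v : V, ((c'.a v : ℝ))^p := by
      apply Finset.sum_pos
      · intro v _
        exact rpow_pos_of_pos (by exact_mod_cast ha1' v) p
      · exact Finset.univ_nonempty
    have hx1 : (0:ℝ) < (n:ℝ)^(p+1) / scovS p n := div_pos hnp1 hSpos
    have hx2 : (0:ℝ) < 1 / (n:ℝ) * ∑ v : V, ((c'.a v : ℝ))^p :=
      mul_pos (one_div_pos.mpr hn0R) hA'pos
    rw [Cover.pMean, Cover.pMean, hSdef]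
    rw [← Real.mul_rpow hx1.le hx2.le]
    apply Real.rpow_le_rpow_of_nonpos
    · exact mul_pos hx1 hx2
    · rw [div_mul_eq_mul_div, div_le_iff₀ hSpos]
      nlinarith [mul_le_mul_of_nonneg_right main (le_of_lt (one_div_pos.mpr hn0R))]
    · exact le_of_lt (one_div_neg.mpr hneg)
  · -- p > 0
    have main : scovS p n * ∑ v : V, ((c.a v : ℝ))^p
        ≤ (n:ℝ)^(p+1) * ∑ v : V, ((c'.a v : ℝ))^p := by
      rw [← hfibA, ← hfibA', Finset.mul_sum, Finset.mul_sum]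
      apply Finset.sum_le_sum
      intro S hS
      obtain ⟨⟨hQpos, hQle⟩, hval, hrk⟩ := hfiber S hS
      set Q := Finset.univ.filter (fun v => c.φ v = S) with hQ
      have hsum1 : ∑ v ∈ Q, ((c.a v : ℝ))^p = (Q.card:ℝ)^(p+1) := by
        rw [Finset.sum_congr rfl (fun v hv => by rw [hval v hv])]
        rw [Finset.sum_const, nsmul_eq_mul,
          rpow_add_one (by exact_mod_cast hQpos.ne' : (Q.card:ℝ) ≠ 0) p]
        ring
      have hsum2 : scovS p Q.card ≤ ∑ v ∈ Q, ((c'.a v : ℝ))^p := by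
        apply scov_rank_sum_le t c'.a (fun r => (r:ℝ)^p)
        · intro i j hi hij
          exact rpow_le_rpow (by positivity) (by exact_mod_cast hij) hpos.le
        · exact hrk
      calc scovS p n * ∑ v ∈ Q, ((c.a v : ℝ))^p
          = scovS p n * (Q.card:ℝ)^(p+1) := by rw [hsum1]
      _ ≤ (n:ℝ)^(p+1) * scovS p Q.card := scov_ratio_pos hpos hQpos hQle
      _ ≤ (n:ℝ)^(p+1) * ∑ v ∈ Q, ((c'.a v : ℝ))^p := mul_le_mul_of_nonneg_left hsum2 hnp1.le
    have hAnn : (0:ℝ) ≤ ∑ v : V, ((c.a v : ℝ))^p :=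
      Finset.sum_nonneg (fun v _ => rpow_nonneg (Nat.cast_nonneg _) p)
    have hA'nn : (0:ℝ) ≤ ∑ v : V, ((c'.a v : ℝ))^p :=
      Finset.sum_nonneg (fun v _ => rpow_nonneg (Nat.cast_nonneg _) p)
    have hx1 : (0:ℝ) < (n:ℝ)^(p+1) / scovS p n := div_pos hnp1 hSpos
    have hx2 : (0:ℝ) ≤ 1 / (n:ℝ) * ∑ v : V, ((c'.a v : ℝ))^p :=
      mul_nonneg (le_of_lt (one_div_pos.mpr hn0R)) hA'nn
    rw [Cover.pMean, Cover.pMean, hSdef]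
    rw [← Real.mul_rpow hx1.le hx2]
    apply Real.rpow_le_rpow
    · exact mul_nonneg (le_of_lt (one_div_pos.mpr hn0R)) hAnn
    · rw [div_mul_eq_mul_div ((n:ℝ)^(p+1)) (scovS p n)
        (1 / (n:ℝ) * ∑ v : V, ((c'.a v : ℝ))^p), le_div_iff₀ hSpos]
      nlinarith [mul_le_mul_of_nonneg_right main (le_of_lt (one_div_pos.mpr hn0R))]
    · exact le_of_lt (one_div_pos.mpr hpos)
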